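/- Let α ∈ ℝ, γ a positive semidefinite complex q×q matrix, and μ a finite positive semidefinite q×q matrix measure on [α,∞). Define F(z) = γ + ∫_{[α,∞)} (1+t-α)/(t-z) dμ(t) and F⁰(z) := (z-α) F(z) for z ∈ ℂ \ [α,∞). Then Im F⁰(z) = (Im z)·(γ + ∫_{[α,∞)} (1+t-α)(t-α)/|t-z|² dμ(t)) for all z in the domain; consequently (1/Im z)·Im F⁰(z) is positive semidefinite for all non-real z, and F⁰(x) is Hermitian for all real x < α. -/

import Mathlib

open Matrix Complex MeasureTheory Filter
open scoped ComplexOrder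

/-- The "imaginary part" of a complex square matrix: `Im M = (M - M*)/(2i)`. -/
noncomputable def mIm {q : ℕ} (M : Matrix (Fin q) (Fin q) ℂ) : Matrix (Fin q) (Fin q) ℂ :=
  ((2 : ℂ) * Complex.I)⁻¹ • (M - Mᴴ)

/-- The "real part" of a complex square matrix: `Re M = (M + M*)/2`. -/
noncomputable def mRe {q : ℕ} (M : Matrix (Fin q) (Fin q) ℂ) : Matrix (Fin q) (Fin q) ℂ :=
  ((2 : ℂ))⁻¹ • (M + Mᴴ)

lemma key_ident (α t : ℝ) (z : ℂ) (hz : z ≠ (t:ℂ)) :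
    (z - α) * (((1 + t - α : ℝ) : ℂ) / ((t : ℂ) - z))
      - ((starRingEnd ℂ) z - α) * ((starRingEnd ℂ) (((1 + t - α : ℝ) : ℂ) / ((t : ℂ) - z)))
      = 2 * Complex.I * z.im * (((1 + t - α) * (t - α) / ‖(t : ℂ) - z‖ ^ 2 : ℝ) : ℂ) := by
  have h1 : ((t:ℂ) - z) ≠ 0 := sub_ne_zero.mpr (Ne.symm hz)
  have h2 : ((t:ℂ) - (starRingEnd ℂ) z) ≠ 0 := by
    intro h
    apply h1
    have := congrArg (starRingEnd ℂ) h
    simpa using this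
  have hcc : ((t:ℂ) - (starRingEnd ℂ) z) = (starRingEnd ℂ) ((t:ℂ) - z) := by simp
  have habs : ((‖(t:ℂ) - z‖ ^ 2 : ℝ) : ℂ) = ((t:ℂ) - z) * ((t:ℂ) - (starRingEnd ℂ) z) := by
    rw [hcc, Complex.mul_conj']
    norm_cast
  have him : ((z.im : ℝ) : ℂ) * (2 * Complex.I) = z - (starRingEnd ℂ) z := by
    rw [Complex.sub_conj]; push_cast; ring
  push_cast at habs ⊢
  rw [map_div₀, habs]
  simp only [map_sub, map_add, Complex.conj_ofReal, _root_.map_one]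
  field_simp
  linear_combination (-((t:ℂ)-α)*(1+(t:ℂ)-α)) * him

lemma delta_bound (α : ℝ) (z : ℂ) (hz : ∀ t : ℝ, α ≤ t → z ≠ (t : ℂ)) :
    ∃ δ > 0, ∀ t : ℝ, α ≤ t → δ ≤ ‖(t:ℂ) - z‖ := by
  by_cases him : z.im = 0
  · have hre : z.re < α := by
      by_contra h
      push_neg at h
      exact hz z.re h (Complex.ext rfl (by simp [him]))
    refine ⟨α - z.re, by linarith, fun t ht => ?_⟩
    have h1 : |((t:ℂ) - z).re| ≤ ‖(t:ℂ) - z‖ := Complex.abs_re_le_norm _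
    have h2 : ((t:ℂ) - z).re = t - z.re := by simp
    rw [h2] at h1
    have : t - z.re ≤ |t - z.re| := le_abs_self _
    linarith
  · refine ⟨|z.im|, abs_pos.mpr him, fun t ht => ?_⟩
    have h1 : |((t:ℂ) - z).im| ≤ ‖(t:ℂ) - z‖ := Complex.abs_im_le_norm _
    have h2 : ((t:ℂ) - z).im = -z.im := by simp
    rw [h2, abs_neg] at h1
    exact h1

lemma c_bound (α : ℝ) (z : ℂ) (δ : ℝ) (hδ : 0 < δ)
    (hδle : ∀ t : ℝ, α ≤ t → δ ≤ ‖(t:ℂ) - z‖) (t : ℝ) (ht : α ≤ t) :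
    ‖((1 + t - α : ℝ) : ℂ) / ((t : ℂ) - z)‖ ≤ 1 + (1 + ‖z - α‖) / δ := by
  have habs : (0:ℝ) < ‖(t:ℂ) - z‖ := lt_of_lt_of_le hδ (hδle t ht)
  have hnum : ‖((1 + t - α : ℝ) : ℂ)‖ ≤ 1 + ‖(t:ℂ) - z‖ + ‖z - α‖ := by
    have : (((1 + t - α : ℝ) : ℂ)) = 1 + ((t:ℂ) - z) + (z - (α:ℂ)) := by push_cast; ring
    rw [this]
    calc ‖1 + ((t:ℂ) - z) + (z - (α:ℂ))‖
        ≤ ‖1 + ((t:ℂ) - z)‖ + ‖z - (α:ℂ)‖ := norm_add_le _ _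
      _ ≤ ‖(1:ℂ)‖ + ‖(t:ℂ) - z‖ + ‖z - (α:ℂ)‖ := by
          have := norm_add_le (1:ℂ) ((t:ℂ) - z); linarith
      _ = 1 + ‖(t:ℂ) - z‖ + ‖z - α‖ := by simp
  rw [norm_div, div_le_iff₀ habs]
  have hA : (0:ℝ) ≤ ‖z - α‖ := norm_nonneg _
  have hd := hδle t ht
  set A := ‖z - (α:ℂ)‖ with hAdef
  set B := (1 + A) / δ with hBdef
  have hB0 : 0 ≤ B := div_nonneg (by linarith) hδ.le
  have hBδ : B * δ = 1 + A := div_mul_cancel₀ _ hδ.ne'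
  nlinarith [norm_nonneg (((1 + t - α : ℝ) : ℂ)), mul_le_mul_of_nonneg_left hd hB0]

lemma r_bound (α : ℝ) (z : ℂ) (δ : ℝ) (hδ : 0 < δ)
    (hδle : ∀ t : ℝ, α ≤ t → δ ≤ ‖(t:ℂ) - z‖) (t : ℝ) (ht : α ≤ t) :
    |(1 + t - α) * (t - α) / ‖(t : ℂ) - z‖ ^ 2| ≤ (1 + (1 + ‖z - α‖) / δ) ^ 2 := by
  have habs : (0:ℝ) < ‖(t:ℂ) - z‖ := lt_of_lt_of_le hδ (hδle t ht)
  set C := 1 + (1 + ‖z - (α:ℂ)‖) / δ with hC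
  have hC1 : ‖((1 + t - α : ℝ) : ℂ) / ((t : ℂ) - z)‖ ≤ C := c_bound α z δ hδ hδle t ht
  have he : ‖((1 + t - α : ℝ) : ℂ) / ((t : ℂ) - z)‖ = (1 + t - α) / ‖(t:ℂ) - z‖ := by
    rw [norm_div, Complex.norm_real, Real.norm_eq_abs, _root_.abs_of_nonneg (by linarith : (0:ℝ) ≤ 1 + t - α)]
  rw [he] at hC1
  have h2 : (t - α) / ‖(t:ℂ) - z‖ ≤ C := by
    refine le_trans ?_ hC1
    gcongr
    linarith
  have h0 : 0 ≤ (1 + t - α) * (t - α) / ‖(t : ℂ) - z‖ ^ 2 :=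
    div_nonneg (mul_nonneg (by linarith) (by linarith)) (by positivity)
  rw [_root_.abs_of_nonneg h0]
  have : (1 + t - α) * (t - α) / ‖(t : ℂ) - z‖ ^ 2
      = ((1 + t - α) / ‖(t:ℂ) - z‖) * ((t - α) / ‖(t:ℂ) - z‖) := by
    rw [div_mul_div_comm, ← sq]
  rw [this]
  have hn1 : 0 ≤ (t - α) / ‖(t:ℂ) - z‖ := div_nonneg (by linarith) habs.le
  have hn2 : 0 ≤ (1 + t - α) / ‖(t:ℂ) - z‖ := div_nonneg (by linarith) habs.le
  calc ((1 + t - α) / ‖(t:ℂ) - z‖) * ((t - α) / ‖(t:ℂ) - z‖)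
      ≤ C * C := mul_le_mul hC1 h2 hn1 (le_trans hn2 hC1)
    _ = C ^ 2 := (sq C).symm

lemma int_aux {q : ℕ} (α : ℝ) (τ : Measure ℝ)
    (d : ℝ → Matrix (Fin q) (Fin q) ℂ) (hτ : τ (Set.Iio α) = 0)
    (hdmeas : ∀ j k : Fin q, Measurable fun t => d t j k)
    (hdint : ∀ j k, Integrable (fun t => d t j k) τ)
    (c : ℝ → ℂ) (hc : Measurable c) (C : ℝ)
    (hC : ∀ t, α ≤ t → ‖c t‖ ≤ C) (j k : Fin q) :
    Integrable (fun t => c t * d t j k) τ := by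
  have hae : ∀ᵐ t ∂τ, α ≤ t := by
    rw [ae_iff]; convert hτ using 2; ext t; simp [not_le]
  refine Integrable.mono' ((hdint j k).norm.const_mul C)
    ((hc.mul (hdmeas j k)).aestronglyMeasurable) ?_
  filter_upwards [hae] with t ht
  rw [norm_mul]
  exact mul_le_mul_of_nonneg_right (by simpa using hC t ht) (norm_nonneg _)

lemma part1 {q : ℕ} (α : ℝ) (γ : Matrix (Fin q) (Fin q) ℂ) (hγ : γ.PosSemidef)
    (τ : Measure ℝ) [IsFiniteMeasure τ] (hτ : τ (Set.Iio α) = 0)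
    (d : ℝ → Matrix (Fin q) (Fin q) ℂ)
    (hdmeas : ∀ j k : Fin q, Measurable fun t => d t j k)
    (hdpsd : ∀ t, (d t).PosSemidef)
    (hdint : ∀ j k, Integrable (fun t => d t j k) τ)
    (z : ℂ) (hz : ∀ t : ℝ, α ≤ t → z ≠ (t : ℂ)) :
    mIm ((z - (α : ℂ)) • (γ + Matrix.of fun j k =>
        ∫ t, ((1 + t - α : ℝ) : ℂ) / ((t : ℂ) - z) * d t j k ∂τ)) = ((z.im : ℝ) : ℂ) •
        (γ + Matrix.of fun j k =>
          ∫ t, (((1 + t - α) * (t - α) / ‖(t : ℂ) - z‖ ^ 2 : ℝ) : ℂ)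
            * d t j k ∂τ) := by
  obtain ⟨δ, hδ, hδle⟩ := delta_bound α z hz
  have hae : ∀ᵐ t ∂τ, α ≤ t := by
    rw [ae_iff]; convert hτ using 2; ext t; simp [not_le]
  set c : ℝ → ℂ := fun t => ((1 + t - α : ℝ) : ℂ) / ((t : ℂ) - z) with hcdef
  have hc : Measurable c := by fun_prop
  set C := 1 + (1 + ‖z - (α:ℂ)‖) / δ with hCdef
  have hint1 : ∀ j k, Integrable (fun t => c t * d t j k) τ :=
    int_aux α τ d hτ hdmeas hdint c hc C (fun t ht => c_bound α z δ hδ hδle t ht)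
  have hint2 : ∀ j k, Integrable (fun t => (starRingEnd ℂ) (c t) * d t j k) τ :=
    int_aux α τ d hτ hdmeas hdint _ ((RCLike.continuous_conj (K := ℂ)).measurable.comp hc) C
      (fun t ht => by rw [Complex.norm_conj]; exact c_bound α z δ hδ hδle t ht)
  have hint3 : ∀ j k, Integrable
      (fun t : ℝ => (((1 + t - α) * (t - α) / ‖(t : ℂ) - z‖ ^ 2 : ℝ) : ℂ) * d t j k) τ :=
    int_aux α τ d hτ hdmeas hdint
      (fun t : ℝ => (((1 + t - α) * (t - α) / ‖(t : ℂ) - z‖ ^ 2 : ℝ) : ℂ))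
      (by
        have h : Measurable (fun t : ℝ => ‖(t:ℂ) - z‖) :=
          (Complex.measurable_ofReal.sub measurable_const).norm
        exact Complex.measurable_ofReal.comp
          ((((measurable_const.add measurable_id').sub measurable_const).mul
            (measurable_id'.sub measurable_const)).div (h.pow_const 2))) (C ^ 2)
      (fun t ht => by rw [Complex.norm_real, Real.norm_eq_abs]; exact r_bound α z δ hδ hδle t ht)
  ext j k
  simp only [mIm, Matrix.smul_apply, Matrix.sub_apply, Matrix.conjTranspose_apply,
    Matrix.add_apply, Matrix.of_apply, smul_eq_mul, star_mul', Complex.star_def, map_sub,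
    Complex.conj_ofReal, map_add]
  have hγh : (starRingEnd ℂ) (γ k j) = γ j k := hγ.1.apply j k
  have hconjA : (starRingEnd ℂ) (∫ t, c t * d t k j ∂τ)
      = ∫ t, (starRingEnd ℂ) (c t) * d t j k ∂τ := by
    rw [← integral_conj]
    congr 1
    funext t
    rw [_root_.map_mul]
    congr 1
    exact (hdpsd t).1.apply j k
  have hAB : (z - (α:ℂ)) * (∫ t, c t * d t j k ∂τ)
        - ((starRingEnd ℂ) z - (α:ℂ)) * (∫ t, (starRingEnd ℂ) (c t) * d t j k ∂τ)
      = 2 * Complex.I * z.im * ∫ t,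
          (((1 + t - α) * (t - α) / ‖(t : ℂ) - z‖ ^ 2 : ℝ) : ℂ) * d t j k ∂τ := by
    rw [← integral_const_mul, ← integral_const_mul, ← integral_const_mul,
      ← integral_sub ((hint1 j k).const_mul _) ((hint2 j k).const_mul _)]
    apply integral_congr_ae
    filter_upwards [hae] with t ht
    have hk := key_ident α t z (hz t ht)
    calc (z - (α:ℂ)) * (c t * d t j k) - ((starRingEnd ℂ) z - (α:ℂ)) * ((starRingEnd ℂ) (c t) * d t j k)
        = ((z - (α:ℂ)) * c t - ((starRingEnd ℂ) z - (α:ℂ)) * (starRingEnd ℂ) (c t)) * d t j k := by ring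
      _ = _ := by
          have hk' : (z - (α:ℂ)) * c t - ((starRingEnd ℂ) z - (α:ℂ)) * (starRingEnd ℂ) (c t)
              = 2 * Complex.I * z.im
                * (((1 + t - α) * (t - α) / ‖(t : ℂ) - z‖ ^ 2 : ℝ) : ℂ) := hk
          rw [hk']
          ring
  rw [hγh, hconjA]
  have him : ((z.im : ℝ) : ℂ) * (2 * Complex.I) = z - (starRingEnd ℂ) z := by
    rw [Complex.sub_conj]; push_cast; ring
  have hI : (2 * Complex.I) ≠ 0 := by simp [Complex.I_ne_zero]
  have hE : (z - (α:ℂ)) * (γ j k + ∫ t, c t * d t j k ∂τ)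
      - ((starRingEnd ℂ) z - (α:ℂ)) * (γ j k + ∫ t, (starRingEnd ℂ) (c t) * d t j k ∂τ)
      = (2 * Complex.I) * (((z.im : ℝ) : ℂ) * (γ j k
          + ∫ t, (((1 + t - α) * (t - α) / ‖(t : ℂ) - z‖ ^ 2 : ℝ) : ℂ) * d t j k ∂τ)) := by
    linear_combination hAB - γ j k * him
  rw [show (∫ t, ((1 + t - α : ℝ) : ℂ) / ((t : ℂ) - z) * d t j k ∂τ) = ∫ t, c t * d t j k ∂τ from rfl,
    hE, ← mul_assoc, inv_mul_cancel₀ hI, one_mul]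

lemma psd_integral {q : ℕ} (τ : Measure ℝ) [IsFiniteMeasure τ]
    (d : ℝ → Matrix (Fin q) (Fin q) ℂ)
    (hdpsd : ∀ t, (d t).PosSemidef)
    (r : ℝ → ℝ) (hrpos : ∀ᵐ t ∂τ, 0 ≤ r t)
    (hint : ∀ j k, Integrable (fun t => ((r t : ℝ) : ℂ) * d t j k) τ) :
    (Matrix.of fun j k => ∫ t, ((r t : ℝ) : ℂ) * d t j k ∂τ).PosSemidef := by
  rw [Matrix.posSemidef_iff_dotProduct_mulVec]
  constructor
  · ext i j
    rw [Matrix.conjTranspose_apply, Matrix.of_apply, Matrix.of_apply, Complex.star_def,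
      ← integral_conj]
    congr 1
    funext t
    rw [_root_.map_mul, Complex.conj_ofReal]
    congr 1
    exact (hdpsd t).1.apply i j
  · intro x
    set g : ℝ → ℂ := fun t => ((r t : ℝ) : ℂ) * (star x ⬝ᵥ (d t *ᵥ x)) with hgdef
    have hgsum : g = fun t => ∑ i, ∑ j, star (x i) * (((r t : ℝ) : ℂ) * d t i j * x j) := by
      funext t
      simp only [hgdef, dotProduct, mulVec, Finset.mul_sum, Pi.star_apply]
      refine Finset.sum_congr rfl fun i _ => Finset.sum_congr rfl fun j _ => by ring
    have hgint : Integrable g τ := by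
      rw [hgsum]
      exact integrable_finset_sum _ fun i _ => integrable_finset_sum _ fun j _ =>
        ((hint i j).mul_const (x j)).const_mul (star (x i))
    have hq : star x ⬝ᵥ ((Matrix.of fun j k => ∫ t, ((r t : ℝ) : ℂ) * d t j k ∂τ) *ᵥ x)
        = ∫ t, g t ∂τ := by
      simp only [dotProduct, mulVec, Matrix.of_apply, Finset.mul_sum, Pi.star_apply]
      calc ∑ i, ∑ j, star (x i) * ((∫ t, ((r t : ℝ) : ℂ) * d t i j ∂τ) * x j)
          = ∑ i, ∑ j, ∫ t, star (x i) * (((r t : ℝ) : ℂ) * d t i j * x j) ∂τ := by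
            refine Finset.sum_congr rfl fun i _ => Finset.sum_congr rfl fun j _ => ?_
            rw [← integral_mul_const, ← integral_const_mul]
        _ = ∫ t, ∑ i, ∑ j, star (x i) * (((r t : ℝ) : ℂ) * d t i j * x j) ∂τ := by
            rw [integral_finset_sum _ fun i _ => integrable_finset_sum _ fun j _ =>
              ((hint i j).mul_const (x j)).const_mul (star (x i))]
            exact Finset.sum_congr rfl fun i _ =>
              (integral_finset_sum _ fun j _ =>
                ((hint i j).mul_const (x j)).const_mul (star (x i))).symm
        _ = ∫ t, g t ∂τ := by rw [hgsum]
    rw [hq, Complex.nonneg_iff]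
    have hae2 : ∀ᵐ t ∂τ, 0 ≤ (g t).re ∧ (g t).im = 0 := by
      filter_upwards [hrpos] with t ht
      have hQ := (hdpsd t).dotProduct_mulVec_nonneg x
      rw [Complex.nonneg_iff] at hQ
      constructor
      · rw [hgdef]
        simp only [Complex.re_ofReal_mul]
        exact mul_nonneg ht hQ.1
      · rw [hgdef]
        simp only [Complex.im_ofReal_mul]
        rw [← hQ.2, mul_zero]
    have hre : (∫ t, g t ∂τ).re = ∫ t, (g t).re ∂τ := by
      have h := integral_re hgint
      simpa [RCLike.re_to_complex] using h.symm
    have him : (∫ t, g t ∂τ).im = ∫ t, (g t).im ∂τ := by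
      have h := integral_im hgint
      simpa [RCLike.im_to_complex] using h.symm
    constructor
    · rw [hre]
      apply integral_nonneg_of_ae
      filter_upwards [hae2] with t ht using ht.1
    · rw [him]
      symm
      rw [integral_eq_zero_of_ae]
      filter_upwards [hae2] with t ht using ht.2

theorem stmt16 {q : ℕ} (α : ℝ) (γ : Matrix (Fin q) (Fin q) ℂ) (hγ : γ.PosSemidef)
    (τ : Measure ℝ) [IsFiniteMeasure τ] (hτ : τ (Set.Iio α) = 0)
    (d : ℝ → Matrix (Fin q) (Fin q) ℂ)
    (hdmeas : ∀ j k : Fin q, Measurable fun t => d t j k)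
    (hdpsd : ∀ t, (d t).PosSemidef)
    (hdint : ∀ j k, Integrable (fun t => d t j k) τ)
    (F : ℂ → Matrix (Fin q) (Fin q) ℂ)
    (hF : ∀ z : ℂ, (∀ t : ℝ, α ≤ t → z ≠ (t : ℂ)) →
      F z = γ + Matrix.of fun j k =>
        ∫ t, ((1 + t - α : ℝ) : ℂ) / ((t : ℂ) - z) * d t j k ∂τ) :
    (∀ z : ℂ, (∀ t : ℝ, α ≤ t → z ≠ (t : ℂ)) →
      mIm ((z - (α : ℂ)) • F z) = ((z.im : ℝ) : ℂ) •
        (γ + Matrix.of fun j k =>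
          ∫ t, (((1 + t - α) * (t - α) / ‖(t : ℂ) - z‖ ^ 2 : ℝ) : ℂ)
            * d t j k ∂τ))
    ∧ (∀ z : ℂ, z.im ≠ 0 → ((((z.im)⁻¹ : ℝ) : ℂ) • mIm ((z - (α : ℂ)) • F z)).PosSemidef)
    ∧ (∀ x : ℝ, x < α → (((x : ℂ) - (α : ℂ)) • F (x : ℂ)).IsHermitian) := by
  have hae : ∀ᵐ t ∂τ, α ≤ t := by
    rw [ae_iff]; convert hτ using 2; ext t; simp [not_le]
  have key : ∀ z : ℂ, (∀ t : ℝ, α ≤ t → z ≠ (t : ℂ)) →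
      mIm ((z - (α : ℂ)) • F z) = ((z.im : ℝ) : ℂ) •
        (γ + Matrix.of fun j k =>
          ∫ t, (((1 + t - α) * (t - α) / ‖(t : ℂ) - z‖ ^ 2 : ℝ) : ℂ)
            * d t j k ∂τ) := by
    intro z hz
    rw [hF z hz]
    exact part1 α γ hγ τ hτ d hdmeas hdpsd hdint z hz
  refine ⟨key, ?_, ?_⟩
  · intro z hz0
    have hz : ∀ t : ℝ, α ≤ t → z ≠ (t : ℂ) := by
      intro t _ h
      apply hz0
      rw [h]
      simp
    rw [key z hz, smul_smul, ← Complex.ofReal_mul, inv_mul_cancel₀ hz0,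
      Complex.ofReal_one, one_smul]
    apply hγ.add
    obtain ⟨δ, hδ, hδle⟩ := delta_bound α z hz
    have hint3 : ∀ j k, Integrable
        (fun t : ℝ => (((1 + t - α) * (t - α) / ‖(t : ℂ) - z‖ ^ 2 : ℝ) : ℂ) * d t j k) τ :=
      int_aux α τ d hτ hdmeas hdint
        (fun t : ℝ => (((1 + t - α) * (t - α) / ‖(t : ℂ) - z‖ ^ 2 : ℝ) : ℂ))
        (by
          have h : Measurable (fun t : ℝ => ‖(t:ℂ) - z‖) :=
            (Complex.measurable_ofReal.sub measurable_const).norm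
          exact Complex.measurable_ofReal.comp
            ((((measurable_const.add measurable_id').sub measurable_const).mul
              (measurable_id'.sub measurable_const)).div (h.pow_const 2)))
        ((1 + (1 + ‖z - (α:ℂ)‖) / δ) ^ 2)
        (fun t ht => by rw [Complex.norm_real, Real.norm_eq_abs]; exact r_bound α z δ hδ hδle t ht)
    exact psd_integral τ d hdpsd _
      (by
        filter_upwards [hae] with t ht
        apply div_nonneg (mul_nonneg (by linarith) (by linarith)) (by positivity))
      hint3
  · intro x hx
    have hz : ∀ t : ℝ, α ≤ t → (x:ℂ) ≠ (t : ℂ) := by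
      intro t ht h
      have := Complex.ofReal_injective h
      linarith
    have h0 := key (x:ℂ) hz
    rw [Complex.ofReal_im, Complex.ofReal_zero, zero_smul] at h0
    unfold mIm at h0
    rw [smul_eq_zero] at h0
    rcases h0 with h | h
    · exfalso
      rw [inv_eq_zero] at h
      exact two_ne_zero (by simpa [Complex.ext_iff] using h)
    · exact (sub_eq_zero.mp h).symm
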